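/- arXiv:2602.09402 — 2 statements merged into one kernel-verified Lean document; each statement's English description precedes it below -/
import Mathlib

section
/- Let H₃ = {h₁, h₂, h₃} over singleton domain {x} and Y = {1,2,3} with h₁(x) = {2,3}, h₂(x) = {1,3}, h₃(x) = {1,2}. For any (possibly randomized) online learner A in the mistake-unknown agnostic setting and any horizon T, there exists an adversarial sequence (x, y_t, S_t)_{t=1}^T with y_t ∈ S_t for all t such that E[∑_{t=1}^T 1[ŷ_t ∉ S_t]] − min_{h ∈ H₃} ∑_{t=1}^T 1[h(x) ≠ S_t] ≥ T/9. -/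
/-- The history of (instance, label) pairs revealed before round `t` in the
mistake-unknown model: only the single labels `y_s`, `s < t`, are revealed. -/
def histU {T : ℕ} (y : Fin T → Fin 3) (t : Fin T) : List (Unit × Fin 3) :=
  List.ofFn (fun i : Fin t.1 => ((), y ⟨i.1, i.isLt.trans t.isLt⟩))

/-- A label minimizing `p`. -/
noncomputable def argmin3 (p : Fin 3 → ℝ) : Fin 3 :=
  if p 0 ≤ p 1 ∧ p 0 ≤ p 2 then 0 else if p 1 ≤ p 2 then 1 else 2

lemma argmin3_le (p : Fin 3 → ℝ) (j : Fin 3) : p (argmin3 p) ≤ p j := by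
  unfold argmin3
  rcases le_or_gt (p 0) (p 1) with h01 | h01 <;>
  rcases le_or_gt (p 0) (p 2) with h02 | h02 <;>
  rcases le_or_gt (p 1) (p 2) with h12 | h12 <;>
  split_ifs <;> fin_cases j <;> simp_all <;> linarith

/-- The adversarial history: at each step append the label of least learner mass. -/
noncomputable def advHist (A : List (Unit × Fin 3) → Unit → PMF (Fin 3)) : ℕ → List (Unit × Fin 3)
  | 0 => []
  | t + 1 => advHist A t ++
      [((), argmin3 (fun j => ((A (advHist A t) ()) j).toReal))]

/-- The adversarial label at round `t`. -/
noncomputable def advy (A : List (Unit × Fin 3) → Unit → PMF (Fin 3)) (t : ℕ) : Fin 3 :=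
  argmin3 (fun j => ((A (advHist A t) ()) j).toReal)

lemma advHist_eq_ofFn (A : List (Unit × Fin 3) → Unit → PMF (Fin 3)) (t : ℕ) :
    advHist A t = List.ofFn (fun i : Fin t => ((), advy A i.1)) := by
  induction t with
  | zero => simp [advHist]
  | succ t ih =>
      rw [List.ofFn_succ', List.concat_eq_append]
      show advHist A t ++ [((), advy A t)] = _
      rw [ih]
      rfl

lemma pmf_sum_toReal (q : PMF (Fin 3)) : ∑ j : Fin 3, (q j).toReal = 1 := by
  have h1 : ∑ j : Fin 3, q j = 1 := by
    rw [← tsum_fintype (L := .unconditional _)]; exact q.tsum_coe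
  have h2 : ∀ j : Fin 3, q j ≠ ⊤ := fun j => (q.coe_le_one j).trans_lt (by simp) |>.ne
  rw [← ENNReal.toReal_sum (fun j _ => h2 j), h1, ENNReal.toReal_one]

open scoped Classical in
/-- Any randomized mistake-unknown learner suffers regret at least T/9 on H₃, where
H₃ consists of the three hypotheses with value sets {1,2}, {0,2}, {0,1} ⊆ Fin 3. -/
theorem stmt11 (A : List (Unit × Fin 3) → Unit → PMF (Fin 3)) (T : ℕ) :
    ∃ (y : Fin T → Fin 3) (S : Fin T → Set (Fin 3)), (∀ t, y t ∈ S t) ∧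
      (T : ℝ) / 9 ≤
        (∑ t : Fin T, ∑ r : Fin 3,
            if r ∉ S t then ((A (histU y t) ()) r).toReal else 0)
        - min (min
            (∑ t : Fin T, if S t ≠ ({1, 2} : Set (Fin 3)) then (1 : ℝ) else 0)
            (∑ t : Fin T, if S t ≠ ({0, 2} : Set (Fin 3)) then (1 : ℝ) else 0))
            (∑ t : Fin T, if S t ≠ ({0, 1} : Set (Fin 3)) then (1 : ℝ) else 0) := by
  set y : Fin T → Fin 3 := fun t => advy A t.1 with hy
  have hhist : ∀ t : Fin T, histU y t = advHist A t.1 := by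
    intro t
    rw [advHist_eq_ofFn]
    rfl
  set p : Fin T → Fin 3 → ℝ := fun t j => ((A (histU y t) ()) j).toReal with hp
  have hargmin : ∀ t : Fin T, ∀ j : Fin 3, p t (y t) ≤ p t j := by
    intro t j
    show ((A (histU y t) ()) (y t)).toReal ≤ ((A (histU y t) ()) j).toReal
    rw [hhist t]
    exact argmin3_le (fun j => ((A (advHist A t.1) ()) j).toReal) j
  have hpsum : ∀ t : Fin T, ∑ j : Fin 3, p t j = 1 := fun t => pmf_sum_toReal _
  have hpnn : ∀ t : Fin T, ∀ j, 0 ≤ p t j := fun t j => ENNReal.toReal_nonneg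
  have hthird : ∀ t : Fin T, p t (y t) ≤ 1 / 3 := by
    intro t
    have h0 := hargmin t 0
    have h1 := hargmin t 1
    have h2 := hargmin t 2
    have hs := hpsum t
    rw [Fin.sum_univ_three] at hs
    linarith
  -- the regret contribution of hypothesis j
  set c : Fin 3 → ℝ := fun j => ∑ t : Fin T, (if y t = j then -(p t j) else p t j) with hc
  have hcsum : (T : ℝ) / 3 ≤ c 0 + c 1 + c 2 := by
    have key : ∀ t : Fin T,
        (1 : ℝ) / 3 ≤ ∑ j : Fin 3, (if y t = j then -(p t j) else p t j) := by
      intro t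
      have heq : ∑ j : Fin 3, (if y t = j then -(p t j) else p t j)
          = (∑ j : Fin 3, p t j) - 2 * p t (y t) := by
        rcases (by decide : ∀ a : Fin 3, a = 0 ∨ a = 1 ∨ a = 2) (y t) with h | h | h <;>
          rw [Fin.sum_univ_three, Fin.sum_univ_three, h] <;> simp <;> ring
      rw [heq, hpsum t]
      have := hthird t
      linarith
    have h1 : ∑ _t : Fin T, (1 : ℝ) / 3
        ≤ ∑ t : Fin T, ∑ j : Fin 3, (if y t = j then -(p t j) else p t j) :=
      Finset.sum_le_sum (fun t _ => key t)
    rw [Finset.sum_comm, Fin.sum_univ_three] at h1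
    have h2 : (∑ _t : Fin T, (1 : ℝ) / 3) = (T : ℝ) / 3 := by
      rw [Finset.sum_const, Finset.card_univ, Fintype.card_fin, nsmul_eq_mul]
      ring
    rw [h2] at h1
    exact h1
  obtain ⟨j, hj⟩ : ∃ j : Fin 3, (T : ℝ) / 9 ≤ c j := by
    by_contra hcon
    push_neg at hcon
    have g0 := hcon 0
    have g1 := hcon 1
    have g2 := hcon 2
    linarith
  have hcpl : ({j}ᶜ : Set (Fin 3)) = {1, 2} ∨ ({j}ᶜ : Set (Fin 3)) = {0, 2}
      ∨ ({j}ᶜ : Set (Fin 3)) = {0, 1} := by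
    have hne : j = 0 ∨ j = 1 ∨ j = 2 := by omega
    rcases hne with h | h | h
    · left; rw [h]; ext x; fin_cases x <;> simp
    · right; left; rw [h]; ext x; fin_cases x <;> simp
    · right; right; rw [h]; ext x; fin_cases x <;> simp
  refine ⟨y, fun t => if y t = j then ({j} : Set (Fin 3)) else ({j}ᶜ : Set (Fin 3)), ?_, ?_⟩
  · intro t
    by_cases h : y t = j <;> simp [h]
  · set S : Fin T → Set (Fin 3) :=
      fun t => if y t = j then ({j} : Set (Fin 3)) else ({j}ᶜ : Set (Fin 3)) with hS
    have hsingle : ∀ t : Fin T, ∑ r : Fin 3, (if r = j then p t r else 0) = p t j := by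
      intro t; simp
    -- learner loss per round
    have hloss : ∀ t : Fin T,
        (∑ r : Fin 3, if r ∉ S t then p t r else 0)
          = if y t = j then 1 - p t j else p t j := by
      intro t
      by_cases h : y t = j
      · have he : ∀ r : Fin 3,
            (if r ∉ S t then p t r else 0) = p t r - (if r = j then p t r else 0) := by
          intro r
          by_cases hr : r = j <;> simp [hS, h, hr]
        rw [Finset.sum_congr rfl (fun r _ => he r), Finset.sum_sub_distrib, hpsum t,
          hsingle t, if_pos h]
      · have he : ∀ r : Fin 3,
            (if r ∉ S t then p t r else 0) = (if r = j then p t r else 0) := by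
          intro r
          by_cases hr : r = j <;> simp [hS, h, hr]
        rw [Finset.sum_congr rfl (fun r _ => he r), hsingle t, if_neg h]
    -- comparator j's loss equals the number of rounds with y t = j
    have hcompj : (∑ t : Fin T, if S t ≠ ({j}ᶜ : Set (Fin 3)) then (1 : ℝ) else 0)
        = ∑ t : Fin T, (if y t = j then (1 : ℝ) else 0) := by
      apply Finset.sum_congr rfl
      intro t _
      by_cases h : y t = j
      · have hne : ({j} : Set (Fin 3)) ≠ ({j}ᶜ : Set (Fin 3)) := by
          intro heq
          have : j ∈ ({j}ᶜ : Set (Fin 3)) := heq ▸ rfl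
          simp at this
        simp [hS, h, hne]
      · simp [hS, h]
    -- the minimum of the three comparator losses is at most comparator j's loss
    have hmin : min (min
          (∑ t : Fin T, if S t ≠ ({1, 2} : Set (Fin 3)) then (1 : ℝ) else 0)
          (∑ t : Fin T, if S t ≠ ({0, 2} : Set (Fin 3)) then (1 : ℝ) else 0))
          (∑ t : Fin T, if S t ≠ ({0, 1} : Set (Fin 3)) then (1 : ℝ) else 0)
        ≤ ∑ t : Fin T, (if y t = j then (1 : ℝ) else 0) := by
      rw [← hcompj]
      rcases hcpl with h | h | h <;> rw [h]
      · exact le_trans (min_le_left _ _) (min_le_left _ _)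
      · exact le_trans (min_le_left _ _) (min_le_right _ _)
      · exact min_le_right _ _
    have hfinal : (∑ t : Fin T, ∑ r : Fin 3, if r ∉ S t then p t r else 0)
        - ∑ t : Fin T, (if y t = j then (1 : ℝ) else 0) = c j := by
      rw [Finset.sum_congr rfl (fun t _ => hloss t), ← Finset.sum_sub_distrib]
      show _ = ∑ t : Fin T, (if y t = j then -(p t j) else p t j)
      apply Finset.sum_congr rfl
      intro t _
      by_cases h : y t = j <;> simp [h]
    have hfin2 := sub_le_sub_left hmin
      (∑ t : Fin T, ∑ r : Fin 3, if r ∉ S t then p t r else 0)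
    calc (T : ℝ) / 9 ≤ c j := hj
      _ = _ := hfinal.symm
      _ ≤ _ := hfin2
end

section
/- Under the hypotheses of the constant-regret theorem (for all h, h' ∈ H and x ∈ X: 2·|h'(x)\h(x)| ≤ |h(x)|), the per-round potential of the Set-Valued Weighted Majority Algorithm is a supermartingale: E[W^{(t+1)} | w^{(t)}] ≤ W^{(t)}, where W^{(t)} = ∑_{h ∈ H} w^{(t)}(h). -/
/-- One-step supermartingale property of the Set-Valued Weighted Majority potential:
the hypothesis class is a finite family `h : ι → X → Finset Y` with nonnegative weights
`w`. Given instance `x` and true set `S`, the algorithm predicts `y` with probability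
`v(y)/V`, where `v(y) = ∑_{i : y ∈ h i x} w i` and `V = ∑_y v(y)`. On a mistake
(`y ∉ S`) the weights of hypotheses with `h i x = S` double; otherwise the weights of
hypotheses with `h i x ≠ S` are halved. Under the combinatorial condition
`2|h'(x) \ h(x)| ≤ |h(x)|`, the expected new total weight is at most the old total. -/
theorem stmt15 {X Y ι : Type} [Fintype Y] [DecidableEq Y] [Fintype ι]
    (h : ι → X → Finset Y)
    (hcond : ∀ i j : ι, ∀ x : X, 2 * ((h j x) \ (h i x)).card ≤ (h i x).card)
    (w : ι → ℝ) (hw : ∀ i, 0 ≤ w i) (x : X) (S : Finset Y) :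
    ∑ y : Y,
        ((∑ i : ι, if y ∈ h i x then w i else 0) /
            (∑ y' : Y, ∑ i : ι, if y' ∈ h i x then w i else 0)) *
          (∑ i : ι, if y ∉ S then (if h i x = S then 2 * w i else w i)
            else (if h i x = S then w i else w i / 2))
      ≤ ∑ i : ι, w i := by
  classical
  set W := ∑ i : ι, w i with hWdef
  set A := ∑ i : ι, (if h i x = S then w i else 0) with hAdef
  set V := ∑ y' : Y, ∑ i : ι, if y' ∈ h i x then w i else 0 with hVdef
  set v : Y → ℝ := fun y => ∑ i : ι, if y ∈ h i x then w i else 0 with hvdef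
  set C := ∑ y ∈ S, v y with hCdef
  set M := ∑ y ∈ Sᶜ, v y with hMdef
  have hW0 : 0 ≤ W := Finset.sum_nonneg fun i _ => hw i
  have hA0 : 0 ≤ A := Finset.sum_nonneg fun i _ => by split_ifs; exacts [hw i, le_rfl]
  have hAW : A ≤ W := Finset.sum_le_sum fun i _ => by split_ifs <;> simp [hw i]
  have hv0 : ∀ y, 0 ≤ v y := fun y => Finset.sum_nonneg fun i _ => by split_ifs; exacts [hw i, le_rfl]
  have hC0 : 0 ≤ C := Finset.sum_nonneg fun y _ => hv0 y
  have hM0 : 0 ≤ M := Finset.sum_nonneg fun y _ => hv0 y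
  have hVCM : V = C + M := by
    rw [hCdef, hMdef, Finset.sum_add_sum_compl, hVdef]
  -- the inner "new weight" sum
  have hN : ∀ y : Y,
      (∑ i : ι, if y ∉ S then (if h i x = S then 2 * w i else w i)
        else (if h i x = S then w i else w i / 2))
      = if y ∈ S then (W + A) / 2 else (W + A) := by
    intro y
    by_cases hy : y ∈ S
    · simp only [hy, not_true_eq_false, if_false, if_true]
      have : ∀ i : ι, (if h i x = S then w i else w i / 2)
          = w i / 2 + (if h i x = S then w i else 0) / 2 := by
        intro i; split_ifs <;> ring
      rw [Finset.sum_congr rfl fun i _ => this i, Finset.sum_add_distrib,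
        ← Finset.sum_div, ← Finset.sum_div, hWdef, hAdef]
      ring
    · simp only [hy, not_false_eq_true, if_true, if_false]
      have : ∀ i : ι, (if h i x = S then 2 * w i else w i)
          = w i + (if h i x = S then w i else 0) := by
        intro i; split_ifs <;> ring
      rw [Finset.sum_congr rfl fun i _ => this i, Finset.sum_add_distrib, hWdef, hAdef]
  -- counting identities
  have hfilterC : ∀ i : ι, S.filter (· ∈ h i x) = h i x ∩ S := by
    intro i; ext y; simp [Finset.mem_filter, Finset.mem_inter, and_comm]
  have hfilterM : ∀ i : ι, Sᶜ.filter (· ∈ h i x) = h i x \ S := by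
    intro i; ext y; simp [Finset.mem_filter, Finset.mem_sdiff, and_comm]
  have hC : C = ∑ i : ι, ((h i x ∩ S).card : ℝ) * w i := by
    rw [hCdef]
    simp only [hvdef]
    rw [Finset.sum_comm]
    refine Finset.sum_congr rfl fun i _ => ?_
    rw [← Finset.sum_filter, hfilterC i, Finset.sum_const, nsmul_eq_mul]
  have hM : M = ∑ i : ι, ((h i x \ S).card : ℝ) * w i := by
    rw [hMdef]
    simp only [hvdef]
    rw [Finset.sum_comm]
    refine Finset.sum_congr rfl fun i _ => ?_
    rw [← Finset.sum_filter, hfilterM i, Finset.sum_const, nsmul_eq_mul]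
  -- key inequality
  have hkey : 2 * M * A ≤ C * (W - A) := by
    by_cases hex : ∃ i0, h i0 x = S
    · obtain ⟨i0, hi0⟩ := hex
      have h1 : (S.card : ℝ) * A ≤ C := by
        rw [hC, hAdef, Finset.mul_sum]
        refine Finset.sum_le_sum fun i _ => ?_
        by_cases hi : h i x = S
        · simp [hi, Finset.inter_self]
        · simp only [hi, if_false, mul_zero]
          exact mul_nonneg (Nat.cast_nonneg _) (hw i)
      have h2 : 2 * M ≤ (S.card : ℝ) * (W - A) := by
        have hWA : W - A = ∑ i : ι, (if h i x = S then 0 else w i) := by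
          rw [hWdef, hAdef, ← Finset.sum_sub_distrib]
          refine Finset.sum_congr rfl fun i _ => ?_
          split_ifs <;> ring
        rw [hM, Finset.mul_sum, hWA, Finset.mul_sum]
        refine Finset.sum_le_sum fun i _ => ?_
        by_cases hi : h i x = S
        · simp [hi, Finset.sdiff_self]
        · simp only [hi, if_false]
          have hc : 2 * ((h i x \ S).card) ≤ S.card := by
            have := hcond i0 i x
            rwa [hi0] at this
          have hc' : 2 * ((h i x \ S).card : ℝ) ≤ (S.card : ℝ) := by
            exact_mod_cast hc
          nlinarith [hw i]
      nlinarith [mul_le_mul_of_nonneg_right h2 hA0,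
        mul_le_mul_of_nonneg_right h1 (sub_nonneg.2 hAW)]
    · push_neg at hex
      have hAz : A = 0 := by
        rw [hAdef]
        exact Finset.sum_eq_zero fun i _ => by simp [hex i]
      rw [hAz]
      simp only [mul_zero, sub_zero]
      exact mul_nonneg hC0 hW0
  -- rewrite the goal
  have hgoal : ∑ y : Y, (v y / V) *
      (∑ i : ι, if y ∉ S then (if h i x = S then 2 * w i else w i)
        else (if h i x = S then w i else w i / 2))
      = (C * ((W + A) / 2) + M * (W + A)) / V := by
    have step1 : ∀ y : Y, (v y / V) *
        (∑ i : ι, if y ∉ S then (if h i x = S then 2 * w i else w i)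
          else (if h i x = S then w i else w i / 2))
        = (if y ∈ S then v y * ((W + A) / 2) else v y * (W + A)) / V := by
      intro y
      rw [hN y]
      split_ifs <;> ring
    rw [Finset.sum_congr rfl fun y _ => step1 y, ← Finset.sum_div]
    congr 1
    rw [← Finset.sum_add_sum_compl S]
    congr 1
    · rw [hCdef, Finset.sum_mul]
      exact Finset.sum_congr rfl fun y hy => by simp [hy]
    · rw [hMdef, Finset.sum_mul]
      refine Finset.sum_congr rfl fun y hy => ?_
      have : y ∉ S := Finset.mem_compl.mp hy
      simp [this]
  rw [show (∑ y : Y,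
        ((∑ i : ι, if y ∈ h i x then w i else 0) / V) *
          (∑ i : ι, if y ∉ S then (if h i x = S then 2 * w i else w i)
            else (if h i x = S then w i else w i / 2))) = (C * ((W + A) / 2) + M * (W + A)) / V
      from hgoal]
  have hV0 : 0 ≤ V := by rw [hVCM]; linarith
  rcases eq_or_lt_of_le hV0 with h0 | hpos
  · rw [← h0, div_zero]; exact hW0
  · rw [div_le_iff₀ hpos, hVCM]
    nlinarith [hkey]
end
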